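/- Let $g : (0,\infty) \to \mathbb{R}$ be twice differentiable with $\int_0^\infty g'(r)^2 r^2 \, dr < \infty$, and suppose $(r^2 g'(r))' \geq 0$ for all $r > 0$. Then $\liminf_{r \to 0^+} r^2 g'(r) = 0$, and in fact $r^2 g'(r) \geq 0$ for all $r > 0$, so $g$ is nondecreasing on $(0,\infty)$. -/

import Mathlib

open Set MeasureTheory Filter

lemma aux_not_bounded_below (g' : ℝ → ℝ)
    (hint : MeasureTheory.IntegrableOn (fun r => (g' r) ^ 2 * r ^ 2) (Set.Ioi 0))
    {c t : ℝ} (hc : 0 < c) (ht : 0 < t)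
    (hbound : ∀ r ∈ Set.Ioo (0:ℝ) t, c ≤ |r ^ 2 * g' r|) : False := by
  have h1 : IntegrableOn (fun r => (g' r) ^ 2 * r ^ 2) (Ioo 0 t) :=
    hint.mono_set Set.Ioo_subset_Ioi_self
  have h2 : IntegrableOn (fun r => c ^ 2 * r ^ (-2 : ℝ)) (Ioo 0 t) := by
    apply MeasureTheory.Integrable.mono' h1
    · refine (ContinuousOn.aestronglyMeasurable ?_ measurableSet_Ioo)
      intro x hx
      exact (continuousAt_const.mul
        (Real.continuousAt_rpow_const x _ (Or.inl hx.1.ne'))).continuousWithinAt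
    · filter_upwards [ae_restrict_mem measurableSet_Ioo] with r hr
      have hr0 : (0:ℝ) < r := hr.1
      have hr2 : (0:ℝ) < r ^ 2 := by positivity
      have hcsq : c ^ 2 ≤ (r ^ 2 * g' r) ^ 2 := by
        have h := hbound r hr
        nlinarith [sq_abs (r ^ 2 * g' r), abs_nonneg (r ^ 2 * g' r)]
      have hrpow : r ^ (-2 : ℝ) = (r ^ 2)⁻¹ := by
        rw [show (-2 : ℝ) = -(2:ℕ) by norm_num, Real.rpow_neg hr0.le, Real.rpow_natCast]
      have habs : |c ^ 2 * r ^ (-2 : ℝ)| = c ^ 2 * (r ^ 2)⁻¹ := by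
        rw [hrpow, abs_of_nonneg (by positivity)]
      rw [Real.norm_eq_abs, habs]
      have key : (r ^ 2 * g' r) ^ 2 * (r ^ 2)⁻¹ = g' r ^ 2 * r ^ 2 := by
        field_simp
      calc c ^ 2 * (r ^ 2)⁻¹ ≤ (r ^ 2 * g' r) ^ 2 * (r ^ 2)⁻¹ :=
            mul_le_mul_of_nonneg_right hcsq (by positivity)
        _ = g' r ^ 2 * r ^ 2 := key
  have h3 : IntegrableOn (fun r : ℝ => r ^ (-2 : ℝ)) (Ioo 0 t) := by
    have := h2.const_mul ((c ^ 2)⁻¹)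
    have hc2 : (c ^ 2 : ℝ) ≠ 0 := by positivity
    have heq : (fun x : ℝ => (c ^ 2)⁻¹ * (c ^ 2 * x ^ (-2 : ℝ))) = fun x : ℝ => x ^ (-2 : ℝ) := by
      ext x; rw [← mul_assoc, inv_mul_cancel₀ hc2, one_mul]
    rwa [heq] at this
  rw [intervalIntegral.integrableOn_Ioo_rpow_iff ht] at h3
  linarith

theorem liminf_r2g'_zero (g g' h' : ℝ → ℝ)
    (hderiv : ∀ r ∈ Set.Ioi (0 : ℝ), HasDerivAt g (g' r) r)
    (hderiv2 : ∀ r ∈ Set.Ioi (0 : ℝ), HasDerivAt (fun s => s ^ 2 * g' s) (h' r) r)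
    (hint : MeasureTheory.IntegrableOn (fun r => (g' r) ^ 2 * r ^ 2) (Set.Ioi 0))
    (hpos : ∀ r ∈ Set.Ioi (0 : ℝ), 0 ≤ h' r) :
    Filter.liminf (fun r => r ^ 2 * g' r) (nhdsWithin 0 (Set.Ioi 0)) = 0 ∧
    (∀ r > 0, 0 ≤ r ^ 2 * g' r) ∧ MonotoneOn g (Set.Ioi 0) := by
  set F : ℝ → ℝ := fun s => s ^ 2 * g' s with hF
  have Fmono : MonotoneOn F (Ioi 0) := by
    apply monotoneOn_of_deriv_nonneg (convex_Ioi 0)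
    · exact fun x hx => (hderiv2 x hx).continuousAt.continuousWithinAt
    · rw [interior_Ioi]
      exact fun x hx => (hderiv2 x hx).differentiableAt.differentiableWithinAt
    · intro x hx
      rw [interior_Ioi] at hx
      rw [(hderiv2 x hx).deriv]
      exact hpos x hx
  have Fnonneg : ∀ r > (0:ℝ), 0 ≤ F r := by
    intro r hr
    by_contra h
    push_neg at h
    apply aux_not_bounded_below g' hint (c := -F r) (t := r) (by linarith) hr
    intro s hs
    have hFs : F s ≤ F r := Fmono hs.1 hr hs.2.le
    calc -F r ≤ -F s := by linarith
      _ ≤ |F s| := neg_le_abs _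
  have hbdd : BddBelow (F '' Ioi 0) := by
    refine ⟨0, ?_⟩
    rintro y ⟨x, hx, rfl⟩
    exact Fnonneg x hx
  have htend := Fmono.tendsto_nhdsGT hbdd
  have hinf : sInf (F '' Ioi 0) = 0 := by
    refine le_antisymm ?_ (le_csInf ⟨F 1, 1, Set.mem_Ioi.2 one_pos, rfl⟩ ?_)
    · by_contra h
      push_neg at h
      apply aux_not_bounded_below g' hint (c := sInf (F '' Ioi 0)) (t := 1) h one_pos
      intro s hs
      have h1 : sInf (F '' Ioi 0) ≤ F s := csInf_le hbdd ⟨s, hs.1, rfl⟩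
      calc sInf (F '' Ioi 0) ≤ F s := h1
        _ ≤ |F s| := le_abs_self _
    · rintro y ⟨x, hx, rfl⟩
      exact Fnonneg x hx
  rw [hinf] at htend
  refine ⟨htend.liminf_eq, Fnonneg, ?_⟩
  apply monotoneOn_of_deriv_nonneg (convex_Ioi 0)
  · exact fun x hx => (hderiv x hx).continuousAt.continuousWithinAt
  · rw [interior_Ioi]
    exact fun x hx => (hderiv x hx).differentiableAt.differentiableWithinAt
  · intro x hx
    rw [interior_Ioi] at hx
    rw [(hderiv x hx).deriv]
    have hx0 : (0:ℝ) < x := hx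
    have hx2 : (0:ℝ) < x ^ 2 := by positivity
    have hFx : 0 ≤ x ^ 2 * g' x := Fnonneg x hx
    by_contra hneg
    push_neg at hneg
    nlinarith
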